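/- For n×n real symmetric positive semi-definite matrices A and B that commute, the Alpha Procrustes distance reduces to the power Euclidean distance: (1/|α|)(tr[A^{2α} + B^{2α} − 2(A^α B^{2α} A^α)^{1/2}])^{1/2} = ‖(A^α − B^α)/α‖_F for α > 0. -/

import Mathlib

open Classical in
/-- The positive semi-definite square root of a positive semi-definite real matrix
(junk value `0` if the matrix is not positive semi-definite). -/
noncomputable def psdSqrt {n : ℕ} (M : Matrix (Fin n) (Fin n) ℝ) : Matrix (Fin n) (Fin n) ℝ :=
  if h : M.PosSemidef then
    (h.1.eigenvectorUnitary : Matrix (Fin n) (Fin n) ℝ) *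
      Matrix.diagonal (fun i => Real.sqrt (h.1.eigenvalues i)) *
      (star h.1.eigenvectorUnitary : Matrix (Fin n) (Fin n) ℝ)
  else 0

open Classical in
/-- The real power `M ^ r` of a symmetric real matrix, defined through the spectral
functional calculus: `M ^ r = U diag(λᵢ^r) Uᵀ` (with `0 ^ r = 0` for `r > 0`).
Junk value `0` if `M` is not symmetric. -/
noncomputable def matPow {n : ℕ} (M : Matrix (Fin n) (Fin n) ℝ) (r : ℝ) :
    Matrix (Fin n) (Fin n) ℝ :=
  if h : M.IsHermitian then
    (h.eigenvectorUnitary : Matrix (Fin n) (Fin n) ℝ) *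
      Matrix.diagonal (fun i => h.eigenvalues i ^ r) *
      (star h.eigenvectorUnitary : Matrix (Fin n) (Fin n) ℝ)
  else 0

/-- The Frobenius norm of a real matrix. -/
noncomputable def frobNorm {n : ℕ} (M : Matrix (Fin n) (Fin n) ℝ) : ℝ :=
  Real.sqrt (∑ i, ∑ j, (M i j) ^ 2)

open scoped MatrixOrder in
lemma psdSqrt_eq_of_sq {n : ℕ} {M R : Matrix (Fin n) (Fin n) ℝ} (hM : M.PosSemidef)
    (hR : R.PosSemidef) (hsq : R ^ 2 = M) : psdSqrt M = R := by
  have h1 : psdSqrt M = CFC.sqrt M := by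
    rw [CFC.sqrt_eq_cfc, cfc_nnreal_eq_real _ M hM.nonneg, hM.1.cfc_eq, psdSqrt, dif_pos hM,
      Matrix.IsHermitian.cfc, Unitary.conjStarAlgAut_apply]
    congr 2
    ext i j
    rw [Matrix.diagonal_apply, Matrix.diagonal_apply]
    split_ifs
    · simp [max_eq_left (hM.eigenvalues_nonneg i)]
    · rfl
  rw [h1]
  exact CFC.sqrt_unique (by rw [← hsq, pow_two]) hR.nonneg

open Matrix in
lemma commute_diagonal_fn {n : ℕ} (C : Matrix (Fin n) (Fin n) ℝ) (d e : Fin n → ℝ)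
    (hde : ∀ i j, d i = d j → e i = e j)
    (h : C * diagonal d = diagonal d * C) :
    C * diagonal e = diagonal e * C := by
  ext i j
  have h' : C i j * d j = d i * C i j := by
    have := congrFun (congrFun h i) j
    simpa [Matrix.mul_diagonal, Matrix.diagonal_mul] using this
  simp only [Matrix.mul_diagonal, Matrix.diagonal_mul]
  rcases eq_or_ne (C i j) 0 with h0 | h0
  · simp [h0]
  · have hd : d i = d j := by
      rw [mul_comm (d i) (C i j)] at h'
      exact (mul_left_cancel₀ h0 h').symm
    rw [hde i j hd, mul_comm]

open Matrix in
lemma spectral_real {n : ℕ} {A : Matrix (Fin n) (Fin n) ℝ} (hA : A.IsHermitian) :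
    A = (hA.eigenvectorUnitary : Matrix (Fin n) (Fin n) ℝ) *
      Matrix.diagonal hA.eigenvalues *
      (star hA.eigenvectorUnitary : Matrix (Fin n) (Fin n) ℝ) := by
  have h := hA.spectral_theorem
  simpa using h

open Matrix in
lemma comm_matPow {n : ℕ} {A M : Matrix (Fin n) (Fin n) ℝ} (hA : A.IsHermitian)
    (h : A * M = M * A) (r : ℝ) :
    (matPow A r) * M = M * (matPow A r) := by
  classical
  set U : Matrix (Fin n) (Fin n) ℝ := (hA.eigenvectorUnitary : Matrix (Fin n) (Fin n) ℝ)
    with hUdef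
  have hU1 : star U * U = 1 := Matrix.mem_unitaryGroup_iff'.mp hA.eigenvectorUnitary.2
  have hU2 : U * star U = 1 := Matrix.mem_unitaryGroup_iff.mp hA.eigenvectorUnitary.2
  set D : Matrix (Fin n) (Fin n) ℝ := Matrix.diagonal hA.eigenvalues with hDdef
  set C : Matrix (Fin n) (Fin n) ℝ := star U * M * U with hCdef
  have hAspec : A = U * D * star U := spectral_real hA
  have hAU : A * U = U * D := by
    rw [hAspec]
    simp only [Matrix.mul_assoc]
    rw [hU1, Matrix.mul_one]
  have hUA : star U * A = D * star U := by
    rw [hAspec, ← Matrix.mul_assoc, ← Matrix.mul_assoc, hU1, Matrix.one_mul]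
  have hCD : C * D = D * C := by
    rw [hCdef]
    calc star U * M * U * D = star U * (M * (U * D)) := by simp only [Matrix.mul_assoc]
      _ = star U * (M * (A * U)) := by rw [hAU]
      _ = star U * (M * A * U) := by rw [Matrix.mul_assoc M A U]
      _ = star U * (A * M * U) := by rw [h]
      _ = star U * A * (M * U) := by simp only [Matrix.mul_assoc]
      _ = D * (star U * M * U) := by rw [hUA]; simp only [Matrix.mul_assoc]
  set E : Matrix (Fin n) (Fin n) ℝ := Matrix.diagonal (fun i => hA.eigenvalues i ^ r)
    with hEdef
  have hCE : C * E = E * C :=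
    commute_diagonal_fn C hA.eigenvalues _ (fun i j hij => by simp only [hij]) hCD
  have hmp : matPow A r = U * E * star U := by
    rw [matPow, dif_pos hA]
  rw [hmp]
  calc U * E * star U * M
      = U * E * (star U * (M * (U * star U))) := by
        rw [hU2, Matrix.mul_one]; simp only [Matrix.mul_assoc]
    _ = U * (E * C) * star U := by rw [hCdef]; simp only [Matrix.mul_assoc]
    _ = U * (C * E) * star U := by rw [hCE]
    _ = (U * star U) * (M * (U * (E * star U))) := by
        rw [hCdef]; simp only [Matrix.mul_assoc]
    _ = M * (U * E * star U) := by rw [hU2, Matrix.one_mul]; simp only [Matrix.mul_assoc]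

open Matrix in
lemma matPow_posSemidef {n : ℕ} {A : Matrix (Fin n) (Fin n) ℝ} (hA : A.PosSemidef) (r : ℝ) :
    (matPow A r).PosSemidef := by
  rw [matPow, dif_pos hA.1]
  apply Matrix.PosSemidef.mul_mul_conjTranspose_same
  exact Matrix.posSemidef_diagonal_iff.mpr fun i =>
    Real.rpow_nonneg (hA.eigenvalues_nonneg i) r

open Matrix in
lemma matPow_mul_self {n : ℕ} {A : Matrix (Fin n) (Fin n) ℝ} (hA : A.PosSemidef)
    {r s : ℝ} (hrs : r + s ≠ 0) :
    matPow A r * matPow A s = matPow A (r + s) := by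
  classical
  have hU1 : star (hA.1.eigenvectorUnitary : Matrix (Fin n) (Fin n) ℝ) *
      (hA.1.eigenvectorUnitary : Matrix (Fin n) (Fin n) ℝ) = 1 :=
    Matrix.mem_unitaryGroup_iff'.mp hA.1.eigenvectorUnitary.2
  rw [matPow, dif_pos hA.1, matPow, dif_pos hA.1, matPow, dif_pos hA.1]
  set U : Matrix (Fin n) (Fin n) ℝ := (hA.1.eigenvectorUnitary : Matrix (Fin n) (Fin n) ℝ)
  have key : (fun i => hA.1.eigenvalues i ^ r * hA.1.eigenvalues i ^ s)
      = (fun i => hA.1.eigenvalues i ^ (r + s)) := by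
    funext i
    exact (Real.rpow_add' (hA.eigenvalues_nonneg i) hrs).symm
  calc U * Matrix.diagonal (fun i => hA.1.eigenvalues i ^ r) * star U *
        (U * Matrix.diagonal (fun i => hA.1.eigenvalues i ^ s) * star U)
      = U * (Matrix.diagonal (fun i => hA.1.eigenvalues i ^ r) * ((star U * U) *
          (Matrix.diagonal (fun i => hA.1.eigenvalues i ^ s) * star U))) := by
        simp only [Matrix.mul_assoc]
    _ = U * (Matrix.diagonal (fun i => hA.1.eigenvalues i ^ r) *
          Matrix.diagonal (fun i => hA.1.eigenvalues i ^ s)) * star U := by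
        rw [hU1, Matrix.one_mul]; simp only [Matrix.mul_assoc]
    _ = U * Matrix.diagonal (fun i => hA.1.eigenvalues i ^ (r + s)) * star U := by
        rw [Matrix.diagonal_mul_diagonal, key]

/-- For commuting positive semi-definite `A, B` and `α > 0`, the Alpha Procrustes distance
reduces to the power Euclidean distance. -/
theorem stmt4 {n : ℕ} (A B : Matrix (Fin n) (Fin n) ℝ)
    (hA : A.PosSemidef) (hB : B.PosSemidef) (hcomm : A * B = B * A) (α : ℝ) (hα : 0 < α) :
    (1 / |α|) * Real.sqrt ((matPow A (2 * α) + matPow B (2 * α)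
        - 2 • psdSqrt (matPow A α * matPow B (2 * α) * matPow A α)).trace)
      = frobNorm (α⁻¹ • (matPow A α - matPow B α)) := by
  classical
  set X := matPow A α with hXdef
  set Y := matPow B α with hYdef
  have hXpsd : X.PosSemidef := matPow_posSemidef hA α
  have hYpsd : Y.PosSemidef := matPow_posSemidef hB α
  have h2α : α + α ≠ 0 := by positivity
  have hA2 : matPow A (2 * α) = X * X := by
    rw [two_mul, ← matPow_mul_self hA h2α]
  have hB2 : matPow B (2 * α) = Y * Y := by
    rw [two_mul, ← matPow_mul_self hB h2α]
  -- commutation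
  have hXB : X * B = B * X := comm_matPow hA.1 hcomm α
  have hYX : Y * X = X * Y := comm_matPow hB.1 hXB.symm α
  have hYA : Y * A = A * Y := comm_matPow hB.1 hcomm.symm α
  -- X*Y is PSD
  have hhalf : α / 2 + α / 2 ≠ 0 := by positivity
  have hS : matPow A (α / 2) * matPow A (α / 2) = X := by
    rw [matPow_mul_self hA hhalf, hXdef]
    norm_num
  set S := matPow A (α / 2) with hSdef
  have hSY : S * Y = Y * S := comm_matPow hA.1 hYA.symm (α / 2)
  have hSherm : S.conjTranspose = S := (matPow_posSemidef hA (α / 2)).1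
  have hXYpsd : (X * Y).PosSemidef := by
    have hXY : X * Y = S * Y * S.conjTranspose := by
      rw [hSherm, ← hS, Matrix.mul_assoc S S Y, hSY, ← Matrix.mul_assoc, hSY]
    rw [hXY]
    exact hYpsd.mul_mul_conjTranspose_same S
  -- the square root term
  have hsq : (X * Y) ^ 2 = X * (Y * Y) * X := by
    rw [pow_two]
    calc X * Y * (X * Y) = X * ((Y * X) * Y) := by simp only [Matrix.mul_assoc]
      _ = X * ((X * Y) * Y) := by rw [hYX]
      _ = X * (X * (Y * Y)) := by simp only [Matrix.mul_assoc]
      _ = X * (Y * Y) * X := by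
          rw [show X * (Y * Y) * X = X * (Y * (Y * X)) from by simp only [Matrix.mul_assoc],
            hYX, show X * (Y * (X * Y)) = X * ((Y * X) * Y) from by
              simp only [Matrix.mul_assoc], hYX]
          simp only [Matrix.mul_assoc]
  have hMpsd : (X * (Y * Y) * X).PosSemidef := hsq ▸ hXYpsd.pow 2
  have hsqrt : psdSqrt (X * matPow B (2 * α) * X) = X * Y := by
    rw [hB2]
    exact psdSqrt_eq_of_sq hMpsd hXYpsd hsq
  -- trace computation
  have hXherm : X.transpose = X := by
    have := hXpsd.1
    rwa [Matrix.IsHermitian, Matrix.conjTranspose_eq_transpose_of_trivial] at this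
  have hYherm : Y.transpose = Y := by
    have := hYpsd.1
    rwa [Matrix.IsHermitian, Matrix.conjTranspose_eq_transpose_of_trivial] at this
  have htr : (matPow A (2 * α) + matPow B (2 * α)
      - 2 • psdSqrt (X * matPow B (2 * α) * X)).trace
      = ((X - Y).transpose * (X - Y)).trace := by
    rw [hsqrt, hA2, hB2]
    have expand : (X - Y).transpose * (X - Y) = X * X + Y * Y - (X * Y + Y * X) := by
      rw [Matrix.transpose_sub, hXherm, hYherm, Matrix.sub_mul, Matrix.mul_sub,
        Matrix.mul_sub]
      abel
    rw [expand, hYX]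
    congr 1
    rw [two_smul]
  have htr2 : ((X - Y).transpose * (X - Y)).trace = ∑ i, ∑ j, ((X - Y) i j) ^ 2 := by
    rw [Matrix.trace]
    simp only [Matrix.diag_apply, Matrix.mul_apply, Matrix.transpose_apply, sq]
    rw [Finset.sum_comm]
  rw [htr, htr2, frobNorm]
  have habs : |α| = α := abs_of_pos hα
  have hentry : ∀ i j, ((α⁻¹ • (X - Y)) i j) ^ 2 = α⁻¹ ^ 2 * ((X - Y) i j) ^ 2 := by
    intro i j
    simp [Matrix.smul_apply, mul_pow]
  simp_rw [hentry]
  rw [show (∑ i, ∑ j, α⁻¹ ^ 2 * ((X - Y) i j) ^ 2)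
      = α⁻¹ ^ 2 * ∑ i, ∑ j, ((X - Y) i j) ^ 2 from by
    simp_rw [← Finset.mul_sum]]
  rw [Real.sqrt_mul (sq_nonneg _), Real.sqrt_sq (by positivity : (0:ℝ) ≤ α⁻¹), habs, one_div]
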